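/- Let X be a real Banach space, 1 < α ≤ 2, M ≥ 1, ω ≥ 0. Let T, B, C₀ : [0,∞) → L(X) be strongly continuous (t ↦ T(t)x, B(t)x, C₀(t)x continuous for each x ∈ X) with ‖T(t)‖ ≤ M·e^(ωt)·t^(α−1)/Γ(α) and ‖C₀(t)‖ ≤ M·e^(ωt) for all t ≥ 0. Define recursively C_{n+1}(t)x = ∫₀ᵗ T(t−s) B(s) C_n(s)x ds. Then for every n ∈ ℕ and t ≥ 0, setting K_t = sup_{0≤s≤t} ‖B(s)‖, one has ‖C_n(t)x‖ ≤ M^(n+1) · K_t^n · e^(ωt) · (t^(nα)/Γ(nα+1)) · ‖x‖ for all x ∈ X. -/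

import Mathlib

open MeasureTheory

/-- Real Beta integral: `∫₀ᵗ s^(a-1) (t-s)^(b-1) ds = Γ(a)Γ(b)/Γ(a+b) · t^(a+b-1)`. -/
lemma real_beta_integral {a b t : ℝ} (ha : 0 < a) (hb : 0 < b) (ht : 0 < t) :
    ∫ s in (0:ℝ)..t, s ^ (a - 1) * (t - s) ^ (b - 1) =
      Real.Gamma a * Real.Gamma b / Real.Gamma (a + b) * t ^ (a + b - 1) := by
  have hGab : 0 < Real.Gamma (a + b) := Real.Gamma_pos_of_pos (by linarith)
  have h1 : ((∫ s in (0:ℝ)..t, s ^ (a - 1) * (t - s) ^ (b - 1) : ℝ) : ℂ) =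
      (t : ℂ) ^ ((a : ℂ) + b - 1) * Complex.betaIntegral a b := by
    rw [← Complex.betaIntegral_scaled (a : ℂ) (b : ℂ) ht, ← intervalIntegral.integral_ofReal]
    apply intervalIntegral.integral_congr
    intro s hs
    rw [Set.uIcc_of_le ht.le] at hs
    dsimp only
    rw [Complex.ofReal_mul, Complex.ofReal_cpow hs.1, Complex.ofReal_cpow (by linarith [hs.2])]
    push_cast
    ring
  have h2 : Complex.betaIntegral a b =
      ((Real.Gamma a * Real.Gamma b / Real.Gamma (a + b) : ℝ) : ℂ) := by
    have key := Complex.Gamma_mul_Gamma_eq_betaIntegral (s := (a : ℂ)) (t := (b : ℂ))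
      (by simpa using ha) (by simpa using hb)
    rw [show ((a : ℂ) + b) = ((a + b : ℝ) : ℂ) by push_cast; ring, Complex.Gamma_ofReal,
      Complex.Gamma_ofReal, Complex.Gamma_ofReal] at key
    have hne : ((Real.Gamma (a + b) : ℝ) : ℂ) ≠ 0 := by exact_mod_cast hGab.ne'
    push_cast
    rw [eq_div_iff hne]
    linear_combination -key
  rw [← Complex.ofReal_inj, h1, h2, Complex.ofReal_mul, Complex.ofReal_cpow ht.le]
  push_cast
  ring

/-- Bound on the perturbation iterates of the fractional cosine family:
`‖C_n(t)x‖ ≤ M^{n+1} K_t^n e^{ωt} (t^{nα}/Γ(nα+1)) ‖x‖`. -/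
theorem cosine_iterate_bound {X : Type*} [NormedAddCommGroup X] [NormedSpace ℝ X]
    [CompleteSpace X] (α M ω : ℝ) (hα1 : 1 < α) (hα2 : α ≤ 2) (hM : 1 ≤ M) (hω : 0 ≤ ω)
    (T B : ℝ → X →L[ℝ] X) (C : ℕ → ℝ → X →L[ℝ] X)
    (hTcont : ∀ x : X, ContinuousOn (fun t => T t x) (Set.Ici 0))
    (hBcont : ∀ x : X, ContinuousOn (fun t => B t x) (Set.Ici 0))
    (hC0cont : ∀ x : X, ContinuousOn (fun t => C 0 t x) (Set.Ici 0))
    (hTbd : ∀ t : ℝ, 0 ≤ t → ‖T t‖ ≤ M * Real.exp (ω * t) * t ^ (α - 1) / Real.Gamma α)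
    (hC0bd : ∀ t : ℝ, 0 ≤ t → ‖C 0 t‖ ≤ M * Real.exp (ω * t))
    (hrec : ∀ (n : ℕ) (t : ℝ) (x : X),
      C (n + 1) t x = ∫ s in (0:ℝ)..t, T (t - s) (B s (C n s x)))
    (n : ℕ) (t : ℝ) (ht : 0 ≤ t) (x : X) :
    ‖C n t x‖ ≤ M ^ (n + 1) * (sSup ((fun s => ‖B s‖) '' Set.Icc 0 t)) ^ n *
      Real.exp (ω * t) * (t ^ ((n : ℝ) * α) / Real.Gamma ((n : ℝ) * α + 1)) * ‖x‖ := by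
  have hα0 : (0:ℝ) < α := by linarith
  have hM0 : (0:ℝ) ≤ M := by linarith
  induction n generalizing t ht x with
  | zero =>
    have h : ‖C 0 t x‖ ≤ M * Real.exp (ω * t) * ‖x‖ :=
      ((C 0 t).le_opNorm x).trans (mul_le_mul_of_nonneg_right (hC0bd t ht) (norm_nonneg x))
    refine h.trans (le_of_eq ?_)
    simp [Real.Gamma_one]
  | succ n ih =>
    have hnα0 : (0:ℝ) ≤ (n : ℝ) * α := mul_nonneg (Nat.cast_nonneg n) hα0.le
    have hΓα : 0 < Real.Gamma α := Real.Gamma_pos_of_pos hα0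
    have hΓn : 0 < Real.Gamma ((n : ℝ) * α + 1) := Real.Gamma_pos_of_pos (by linarith)
    rcases ht.eq_or_lt with h0 | h0
    · subst h0
      rw [hrec]
      have hexp : ((n : ℝ) + 1) * α ≠ 0 := by
        have : (0:ℝ) < ((n : ℝ) + 1) * α := by positivity
        exact this.ne'
      simp [Real.zero_rpow hexp]
    · -- 0 < t
      have hbddT : BddAbove ((fun s => ‖B s‖) '' Set.Icc 0 t) := by
        have hpt : ∀ y : X, ∃ Cb, ∀ i : Set.Icc (0:ℝ) t, ‖B (i : ℝ) y‖ ≤ Cb := by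
          intro y
          obtain ⟨Cb, hCb⟩ := (isCompact_Icc (a := (0:ℝ)) (b := t)).exists_bound_of_continuousOn
            ((hBcont y).mono Set.Icc_subset_Ici_self)
          exact ⟨Cb, fun i => hCb i i.2⟩
        obtain ⟨C', hC'⟩ := banach_steinhaus hpt
        exact ⟨C', by rintro _ ⟨s, hs, rfl⟩; exact hC' ⟨s, hs⟩⟩
      set K := sSup ((fun s => ‖B s‖) '' Set.Icc 0 t) with hKdef
      have hKmem : ∀ s ∈ Set.Icc (0:ℝ) t, ‖B s‖ ≤ K :=
        fun s hs => le_csSup hbddT ⟨s, hs, rfl⟩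
      have hK0 : 0 ≤ K := (norm_nonneg (B 0)).trans (hKmem 0 ⟨le_rfl, ht⟩)
      have hKs : ∀ s ∈ Set.Icc (0:ℝ) t, sSup ((fun u => ‖B u‖) '' Set.Icc 0 s) ≤ K :=
        fun s hs => csSup_le_csSup hbddT ⟨‖B 0‖, 0, ⟨le_rfl, hs.1⟩, rfl⟩
          (Set.image_mono (Set.Icc_subset_Icc_right hs.2))
      have hKs0 : ∀ s : ℝ, 0 ≤ sSup ((fun u => ‖B u‖) '' Set.Icc 0 s) := by
        intro s
        apply Real.sSup_nonneg
        rintro _ ⟨u, _, rfl⟩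
        exact norm_nonneg _
      set Cst := M ^ (n + 2) * K ^ (n + 1) * Real.exp (ω * t) * ‖x‖ /
        (Real.Gamma α * Real.Gamma ((n : ℝ) * α + 1)) with hCst
      have hCst0 : 0 ≤ Cst :=
        div_nonneg (mul_nonneg (mul_nonneg (mul_nonneg (pow_nonneg hM0 _) (pow_nonneg hK0 _))
          (Real.exp_pos _).le) (norm_nonneg x)) (mul_nonneg hΓα.le hΓn.le)
      have hg_cont : Continuous fun s : ℝ => Cst * (s ^ ((n : ℝ) * α) * (t - s) ^ (α - 1)) := by
        have h1 : Continuous fun s : ℝ => s ^ ((n : ℝ) * α) :=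
          continuous_iff_continuousAt.mpr fun y =>
            Real.continuousAt_rpow_const y _ (Or.inr hnα0)
        have h2 : Continuous fun s : ℝ => (t - s) ^ (α - 1) :=
          (continuous_iff_continuousAt.mpr fun y =>
            Real.continuousAt_rpow_const y _ (Or.inr (by linarith))).comp
            (continuous_const.sub continuous_id)
        exact continuous_const.mul (h1.mul h2)
      have hgint : IntervalIntegrable
          (fun s => Cst * (s ^ ((n : ℝ) * α) * (t - s) ^ (α - 1))) volume 0 t :=
        hg_cont.intervalIntegrable 0 t
      rw [hrec]
      calc ‖∫ s in (0:ℝ)..t, T (t - s) (B s (C n s x))‖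
          ≤ |∫ s in (0:ℝ)..t, Cst * (s ^ ((n : ℝ) * α) * (t - s) ^ (α - 1))| := by
            apply intervalIntegral.norm_integral_le_abs_of_norm_le _ hgint
            filter_upwards [MeasureTheory.ae_restrict_mem measurableSet_uIoc] with s hs
            rw [Set.uIoc_of_le ht] at hs
            have hs0 : 0 ≤ s := hs.1.le
            have hst : s ≤ t := hs.2
            have hts : 0 ≤ t - s := by linarith
            have hC : ‖C n s x‖ ≤ M ^ (n + 1) * K ^ n * Real.exp (ω * s) *
                (s ^ ((n : ℝ) * α) / Real.Gamma ((n : ℝ) * α + 1)) * ‖x‖ := by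
              refine (ih s hs0 x).trans ?_
              gcongr
              · exact hKs0 s
              · exact hKs s ⟨hs0, hst⟩
            have hTnn : 0 ≤ M * Real.exp (ω * (t - s)) * (t - s) ^ (α - 1) / Real.Gamma α :=
              div_nonneg (mul_nonneg (mul_nonneg hM0 (Real.exp_pos _).le)
                (Real.rpow_nonneg hts _)) hΓα.le
            calc ‖T (t - s) (B s (C n s x))‖
                ≤ ‖T (t - s)‖ * ‖B s (C n s x)‖ := (T (t - s)).le_opNorm _
              _ ≤ ‖T (t - s)‖ * (‖B s‖ * ‖C n s x‖) :=
                  mul_le_mul_of_nonneg_left ((B s).le_opNorm _) (norm_nonneg _)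
              _ ≤ (M * Real.exp (ω * (t - s)) * (t - s) ^ (α - 1) / Real.Gamma α) *
                  (K * (M ^ (n + 1) * K ^ n * Real.exp (ω * s) *
                    (s ^ ((n : ℝ) * α) / Real.Gamma ((n : ℝ) * α + 1)) * ‖x‖)) := by
                  apply mul_le_mul (hTbd _ hts) ?_
                    (mul_nonneg (norm_nonneg _) (norm_nonneg _)) hTnn
                  exact mul_le_mul (hKmem s ⟨hs0, hst⟩) hC (norm_nonneg _) hK0
              _ = Cst * (s ^ ((n : ℝ) * α) * (t - s) ^ (α - 1)) := by
                  rw [hCst, show Real.exp (ω * t) = Real.exp (ω * (t - s)) * Real.exp (ω * s) by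
                    rw [← Real.exp_add]; congr 1; ring]
                  field_simp
                  ring
        _ = M ^ (n + 1 + 1) * K ^ (n + 1) * Real.exp (ω * t) *
            (t ^ (((n + 1 : ℕ)) * α : ℝ) / Real.Gamma (((n + 1 : ℕ) : ℝ) * α + 1)) * ‖x‖ := by
            have hbeta : ∫ s in (0:ℝ)..t, s ^ ((n : ℝ) * α) * (t - s) ^ (α - 1) =
                Real.Gamma ((n : ℝ) * α + 1) * Real.Gamma α /
                  Real.Gamma ((n : ℝ) * α + 1 + α) * t ^ ((n : ℝ) * α + 1 + α - 1) := by
              have := real_beta_integral (a := (n : ℝ) * α + 1) (b := α)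
                (by linarith) hα0 h0
              simpa using this
            have hΓX : 0 < Real.Gamma ((n : ℝ) * α + 1 + α) :=
              Real.Gamma_pos_of_pos (by linarith)
            have e1 : (((n + 1 : ℕ)) * α : ℝ) = (n : ℝ) * α + 1 + α - 1 := by push_cast; ring
            have e2 : ((n + 1 : ℕ) : ℝ) * α + 1 = (n : ℝ) * α + 1 + α := by push_cast; ring
            rw [intervalIntegral.integral_const_mul, hbeta, e2, e1, abs_of_nonneg
              (mul_nonneg hCst0 (mul_nonneg (div_nonneg (mul_nonneg hΓn.le hΓα.le) hΓX.le)
                (Real.rpow_nonneg ht _))), hCst]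
            field_simp
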